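/- arXiv:1903.04867 — 2 statements merged into one kernel-verified Lean document; each statement's English description precedes it below -/
import Mathlib

section
/- Let T be a tree, v a vertex, t ≥ 1, and let P_1, ..., P_n be a path partition of T⃗_v (edges directed toward v) with lengths a_1 ≥ a_2 ≥ ... ≥ a_n. For each i let v_i be the endpoint of P_i farther from v. Then the distribution placing t·2^{a_1} − 1 pebbles on v_1 and 2^{a_i} − 1 pebbles on v_i for 2 ≤ i ≤ n does not allow moving t pebbles onto v by pebbling moves. -/
open SimpleGraph Finset

variable {V : Type*} [DecidableEq V]

/-- A single pebbling move: remove two pebbles from `u` and add one on an adjacent `v`. -/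
def PebStep (G : SimpleGraph V) (D D' : V → ℕ) : Prop :=
  ∃ u v, G.Adj u v ∧ 2 ≤ D u ∧
    D' = fun x => if x = u then D u - 2 else if x = v then D v + 1 else D x

/-- Reachability by a sequence of pebbling moves. -/
def PebReach (G : SimpleGraph V) : (V → ℕ) → (V → ℕ) → Prop :=
  Relation.ReflTransGen (PebStep G)

/-- `D` is `ω`-solvable: some sequence of pebbling moves reaches `D'` with `D' ≥ ω`. -/
def Solvable (G : SimpleGraph V) (ω D : V → ℕ) : Prop :=
  ∃ D', PebReach G D D' ∧ ∀ v, ω v ≤ D' v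

/-- The `ω`-cover pebbling number: least `N` such that every distribution of
`N` pebbles is `ω`-solvable. -/
noncomputable def coverNum [Fintype V] (G : SimpleGraph V) (ω : V → ℕ) : ℕ :=
  sInf {N | ∀ D : V → ℕ, (∑ v, D v) = N → Solvable G ω D}

/-- The `t`-pebbling number of a vertex `v`: least `N` such that from every
distribution of `N` pebbles one can move `t` pebbles onto `v`. -/
noncomputable def ftNum [Fintype V] (G : SimpleGraph V) (v : V) (t : ℕ) : ℕ :=
  sInf {N | ∀ D : V → ℕ, (∑ x, D x) = N → ∃ D', PebReach G D D' ∧ t ≤ D' v}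
/-- A system of (directed) paths in `G`, each recorded as a walk with its endpoints. -/
abbrev PathSys (G : SimpleGraph V) := List (Σ a : V, Σ b : V, G.Walk a b)

/-- The list of lengths of the paths in the system. -/
def sysLengths {G : SimpleGraph V} (P : PathSys G) : List ℕ := P.map fun q => q.2.2.length

/-- `P` is a path partition of the directed graph whose edges are the edges of `G`
oriented so that the potential `φ` strictly decreases (for trees, `φ` is the distance
to the root or to the target subtree): the paths are directed (each dart decreases `φ`),
nontrivial, pairwise edge-disjoint, and together cover every directable edge. -/
def IsPartitionTo (G : SimpleGraph V) (φ : V → ℕ) (P : PathSys G) : Prop :=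
  (∀ q ∈ P, q.2.2.IsPath ∧ 0 < q.2.2.length ∧ ∀ d ∈ q.2.2.darts, φ d.snd < φ d.fst) ∧
  P.Pairwise (fun q r => ∀ e ∈ q.2.2.edges, e ∉ r.2.2.edges) ∧
  ∀ a b : V, G.Adj a b → φ b < φ a → ∃ q ∈ P, s(a, b) ∈ q.2.2.edges

/-- Sort a list of naturals in nonincreasing order. -/
def sortDesc (l : List ℕ) : List ℕ := l.insertionSort (· ≥ ·)

/-- `P` is a maximum path partition: its nonincreasing length sequence
lexicographically majorizes that of every other path partition. -/
def IsMaxPartitionTo (G : SimpleGraph V) (φ : V → ℕ) (P : PathSys G) : Prop :=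
  IsPartitionTo G φ P ∧ ∀ Q : PathSys G, IsPartitionTo G φ Q →
    ¬ List.Lex (· < ·) (sortDesc (sysLengths P)) (sortDesc (sysLengths Q))

/-- `∑ᵢ (2^{aᵢ} - 1)` over the path lengths of the system. -/
def pathsExtra {G : SimpleGraph V} (P : PathSys G) : ℕ :=
  ((sysLengths P).map fun a => 2 ^ a - 1).sum

/-- Vertices of the minimal subtree spanning `S`: vertices lying on a geodesic
between two members of `S`. -/
def subtreeSpan (G : SimpleGraph V) (S : Set V) : Set V :=
  {u | ∃ x ∈ S, ∃ y ∈ S, G.dist x u + G.dist u y = G.dist x y}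

/-- Distance from a vertex to a set. -/
noncomputable def distToSet (G : SimpleGraph V) (A : Set V) (u : V) : ℕ :=
  sInf {n | ∃ w ∈ A, G.dist u w = n}

/-- The potential used for `s_ω(v)`: the distance to the minimal subtree `T_ω(v)`
containing `v` and the support of `ω`. -/
noncomputable def phiOmega (G : SimpleGraph V) (ω : V → ℕ) (v : V) : V → ℕ :=
  distToSet G (subtreeSpan G (insert v {u | 0 < ω u}))

set_option linter.unusedSectionVars false

section AuxLemmas

section TreeBasics

variable {T : SimpleGraph V}

lemma tree_path_len (hT : T.IsTree) {a b : V} (p : T.Walk a b) (hp : p.IsPath) :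
    p.length = T.dist a b := by
  obtain ⟨w, hw⟩ := hT.isConnected.exists_walk_length_eq_dist a b
  have hb : w.bypass.IsPath := SimpleGraph.Walk.bypass_isPath w
  have h1 : p = w.bypass := by
    obtain ⟨p', -, hu⟩ := hT.existsUnique_path a b
    rw [hu p hp, hu w.bypass hb]
  have h4 : p.length = w.bypass.length := by rw [h1]
  have h2 : w.bypass.length ≤ w.length := SimpleGraph.Walk.length_bypass_le w
  have h3 := SimpleGraph.dist_le w.bypass
  omega

lemma tree_dist_lt_card (hT : T.IsTree) [Fintype V] (a b : V) :
    T.dist a b < Fintype.card V := by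
  obtain ⟨w, hw⟩ := hT.isConnected.exists_walk_length_eq_dist a b
  have hb : w.bypass.IsPath := SimpleGraph.Walk.bypass_isPath w
  have := hb.length_lt
  have := SimpleGraph.dist_le w.bypass
  omega

lemma tree_adj_dist (hT : T.IsTree) {a b : V} (v : V) (h : T.Adj a b) :
    T.dist a v = T.dist b v + 1 ∨ T.dist b v = T.dist a v + 1 := by
  obtain ⟨w, hw⟩ := hT.isConnected.exists_walk_length_eq_dist b v
  have hb : w.bypass.IsPath := SimpleGraph.Walk.bypass_isPath w
  have hlen : w.bypass.length = T.dist b v := tree_path_len hT _ hb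
  set q := w.bypass with hq
  by_cases ha : a ∈ q.support
  · right
    have h1 : (q.takeUntil a ha).length = T.dist b a := tree_path_len hT _ (hb.takeUntil ha)
    have h2 : (q.dropUntil a ha).length = T.dist a v := tree_path_len hT _ (hb.dropUntil ha)
    have h3 := congrArg SimpleGraph.Walk.length (q.take_spec ha)
    rw [SimpleGraph.Walk.length_append] at h3
    have h4 : T.dist b a = 1 := by
      rw [← tree_path_len hT (SimpleGraph.Walk.cons h.symm SimpleGraph.Walk.nil) (by
        simp [SimpleGraph.Walk.cons_isPath_iff, h.symm.ne])]
      rfl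
    omega
  · left
    have hc : (SimpleGraph.Walk.cons h q).IsPath := hb.cons ha
    have := tree_path_len hT _ hc
    simp only [SimpleGraph.Walk.length_cons] at this
    omega

lemma tree_parent_unique (hT : T.IsTree) {v b x y : V} (hx : T.Adj b x) (hy : T.Adj b y)
    (hdx : T.dist x v + 1 = T.dist b v) (hdy : T.dist y v + 1 = T.dist b v) : x = y := by
  by_contra hne
  obtain ⟨wx, hwx⟩ := hT.isConnected.exists_walk_length_eq_dist x v
  obtain ⟨wy, hwy⟩ := hT.isConnected.exists_walk_length_eq_dist y v
  have hbx : wx.bypass.IsPath := SimpleGraph.Walk.bypass_isPath wx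
  have hby : wy.bypass.IsPath := SimpleGraph.Walk.bypass_isPath wy
  have hlx : wx.bypass.length = T.dist x v := tree_path_len hT _ hbx
  have hly : wy.bypass.length = T.dist y v := tree_path_len hT _ hby
  have hbx' : b ∉ wx.bypass.support := by
    intro hmem
    have := tree_path_len hT _ (hbx.dropUntil hmem)
    have h3 := congrArg SimpleGraph.Walk.length (wx.bypass.take_spec hmem)
    rw [SimpleGraph.Walk.length_append] at h3
    omega
  have hby' : b ∉ wy.bypass.support := by
    intro hmem
    have := tree_path_len hT _ (hby.dropUntil hmem)
    have h3 := congrArg SimpleGraph.Walk.length (wy.bypass.take_spec hmem)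
    rw [SimpleGraph.Walk.length_append] at h3
    omega
  have hpx : (SimpleGraph.Walk.cons hx wx.bypass).IsPath := hbx.cons hbx'
  have hpy : (SimpleGraph.Walk.cons hy wy.bypass).IsPath := hby.cons hby'
  obtain ⟨p', -, hu⟩ := hT.existsUnique_path b v
  have heq : SimpleGraph.Walk.cons hx wx.bypass = SimpleGraph.Walk.cons hy wy.bypass := by
    rw [hu _ hpx, hu _ hpy]
  have := congrArg (fun w => SimpleGraph.Walk.getVert w 1) heq
  simp only [SimpleGraph.Walk.getVert_cons_succ, SimpleGraph.Walk.getVert_zero] at this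
  exact hne this

lemma tree_exists_parent (hT : T.IsTree) {v u : V} (hu : u ≠ v) :
    ∃ x, T.Adj u x ∧ T.dist x v + 1 = T.dist u v := by
  obtain ⟨w, hw⟩ := hT.isConnected.exists_walk_length_eq_dist u v
  have hb : w.bypass.IsPath := SimpleGraph.Walk.bypass_isPath w
  have hlen : w.bypass.length = T.dist u v := tree_path_len hT _ hb
  cases hq : w.bypass with
  | nil => exact absurd rfl hu
  | cons h p =>
    refine ⟨_, h, ?_⟩
    rw [hq] at hb hlen
    have hp : p.IsPath := hb.of_cons
    have := tree_path_len hT _ hp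
    simp only [SimpleGraph.Walk.length_cons] at hlen
    omega

end TreeBasics

section Reach

variable (T : SimpleGraph V) [Fintype V]

open Classical in
/-- children of `u` in the tree rooted at `v` -/
noncomputable def chl (v u : V) : Finset V :=
  Finset.univ.filter fun c => T.Adj u c ∧ T.dist c v = T.dist u v + 1

lemma mem_chl' {v u c : V} : c ∈ chl T v u ↔ T.Adj u c ∧ T.dist c v = T.dist u v + 1 := by
  classical
  simp [chl]

variable {T} in
lemma mem_chl {v u c : V} : c ∈ chl T v u ↔ T.Adj u c ∧ T.dist c v = T.dist u v + 1 :=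
  mem_chl' T

/-- max number of pebbles collectible at `u` (with fuel) -/
noncomputable def reachAux (v : V) (D : V → ℕ) : ℕ → V → ℕ
  | 0, u => D u
  | n+1, u => D u + ∑ c ∈ chl T v u, reachAux v D n c / 2

/-- `y` lies in the subtree rooted at `x` (w.r.t. root `v`) -/
def inSub (v x y : V) : Prop := T.dist y v = T.dist y x + T.dist x v

variable {T}

lemma le_reachAux {v : V} {D : V → ℕ} (n : ℕ) (u : V) : D u ≤ reachAux T v D n u := by
  cases n with
  | zero => exact le_refl _
  | succ n => exact Nat.le_add_right _ _

lemma inSub_self (v x : V) : inSub T v x x := by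
  simp [inSub, SimpleGraph.dist_self]

lemma inSub_dist (hT : T.IsTree) {v x y : V} (h : inSub T v x y) :
    T.dist x v ≤ T.dist y v ∧ (T.dist y v = T.dist x v → y = x) := by
  unfold inSub at h
  constructor
  · omega
  · intro he
    have : T.dist y x = 0 := by omega
    exact (hT.isConnected.dist_eq_zero_iff).mp this

lemma inSub_child (hT : T.IsTree) {v x c y : V} (hc : c ∈ chl T v x) (hy : inSub T v c y) :
    inSub T v x y := by
  rw [mem_chl] at hc
  unfold inSub at hy ⊢
  have h1 : T.dist y v ≤ T.dist y x + T.dist x v := hT.isConnected.dist_triangle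
  have h2 : T.dist y x ≤ T.dist y c + T.dist c x := hT.isConnected.dist_triangle
  have h3 : T.dist c x = 1 := by
    rw [← tree_path_len hT (SimpleGraph.Walk.cons hc.1.symm SimpleGraph.Walk.nil) (by
      simp [SimpleGraph.Walk.cons_isPath_iff, hc.1.symm.ne])]
    rfl
  omega

lemma reachAux_congr (hT : T.IsTree) {v : V} {D D' : V → ℕ} (n : ℕ) (x : V)
    (h : ∀ y, inSub T v x y → D y = D' y) :
    reachAux T v D n x = reachAux T v D' n x := by
  induction n generalizing x with
  | zero => exact h x (inSub_self v x)
  | succ n ih =>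
    show D x + _ = D' x + _
    rw [h x (inSub_self v x)]
    congr 1
    refine Finset.sum_congr rfl fun c hc => ?_
    rw [ih c (fun y hy => h y (inSub_child hT hc hy))]

end Reach

section Steps

variable {T : SimpleGraph V} [Fintype V]

lemma reachAux_succ {v : V} {D : V → ℕ} {n : ℕ} {u : V} :
    reachAux T v D (n+1) u = D u + ∑ c ∈ chl T v u, reachAux T v D n c / 2 := rfl

variable {v a b : V} {D D' : V → ℕ}

lemma reach_src (hT : T.IsTree) (hab : T.Adj a b) (h2 : 2 ≤ D a)
    (hD' : ∀ x, D' x = if x = a then D a - 2 else if x = b then D b + 1 else D x)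
    (hdir : T.dist b v + 1 = T.dist a v) (n : ℕ) :
    reachAux T v D' n a + 2 = reachAux T v D n a := by
  cases n with
  | zero =>
    show D' a + 2 = D a
    rw [hD' a, if_pos rfl]
    omega
  | succ n =>
    rw [reachAux_succ, reachAux_succ, hD' a, if_pos rfl]
    have hsum : ∀ c ∈ chl T v a, reachAux T v D' n c = reachAux T v D n c := by
      intro c hc
      rw [mem_chl] at hc
      refine reachAux_congr hT n c fun y hy => ?_
      have hyd := (inSub_dist hT hy).1
      rw [hD' y, if_neg, if_neg]
      · intro hyb; subst hyb; omega
      · intro hya; subst hya; omega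
    rw [Finset.sum_congr rfl fun c hc => by rw [hsum c hc]]
    omega

lemma step_toward (hT : T.IsTree) (hab : T.Adj a b) (h2 : 2 ≤ D a)
    (hD' : ∀ x, D' x = if x = a then D a - 2 else if x = b then D b + 1 else D x)
    (hdir : T.dist b v + 1 = T.dist a v) :
    ∀ n x, Fintype.card V ≤ T.dist x v + n → reachAux T v D' n x ≤ reachAux T v D n x := by
  have hne : a ≠ b := hab.ne
  intro n
  induction n with
  | zero =>
    intro x hn
    have := tree_dist_lt_card hT x v
    omega
  | succ n ih =>
    intro x hn
    by_cases hx : x = b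
    · rw [hx] at hn ⊢
      have ha_mem : a ∈ chl T v b := mem_chl.mpr ⟨hab.symm, by omega⟩
      rw [reachAux_succ, reachAux_succ,
        ← Finset.add_sum_erase _ _ ha_mem, ← Finset.add_sum_erase _ _ ha_mem]
      have herase : ∀ c ∈ (chl T v b).erase a,
          reachAux T v D' n c = reachAux T v D n c := by
        intro c hc
        have hca : c ≠ a := Finset.ne_of_mem_erase hc
        have hc' := Finset.mem_of_mem_erase hc
        rw [mem_chl] at hc'
        refine reachAux_congr hT n c fun y hy => ?_
        obtain ⟨hyd, hye⟩ := inSub_dist hT hy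
        rw [hD' y, if_neg, if_neg]
        · intro hyb; subst hyb; omega
        · intro hya; subst hya
          exact hca (hye (by omega)).symm
      rw [Finset.sum_congr rfl (fun c hc => by rw [herase c hc] :
        ∀ c ∈ (chl T v b).erase a, reachAux T v D' n c / 2 = reachAux T v D n c / 2)]
      have hsrc := reach_src hT hab h2 hD' hdir n
      have hDa : D a ≤ reachAux T v D n a := le_reachAux n a
      have hb' : D' b = D b + 1 := by rw [hD' b, if_neg (Ne.symm hne), if_pos rfl]
      rw [hb']
      omega
    · rw [reachAux_succ, reachAux_succ]
      have hDx : D' x ≤ D x := by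
        by_cases h1 : x = a
        · rw [hD' x, if_pos h1, h1]; omega
        · rw [hD' x, if_neg h1, if_neg hx]
      refine Nat.add_le_add hDx (Finset.sum_le_sum fun c hc => ?_)
      rw [mem_chl] at hc
      have h5 : reachAux T v D' n c ≤ reachAux T v D n c := ih c (by omega)
      exact Nat.div_le_div_right h5

lemma reach_dst (hT : T.IsTree) (hab : T.Adj a b) (h2 : 2 ≤ D a)
    (hD' : ∀ x, D' x = if x = a then D a - 2 else if x = b then D b + 1 else D x)
    (hdir : T.dist b v = T.dist a v + 1) (n : ℕ) :
    reachAux T v D' n b = reachAux T v D n b + 1 := by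
  have hb' : D' b = D b + 1 := by rw [hD' b, if_neg (Ne.symm hab.ne), if_pos rfl]
  cases n with
  | zero => exact hb'
  | succ n =>
    rw [reachAux_succ, reachAux_succ, hb']
    have hsum : ∀ c ∈ chl T v b, reachAux T v D' n c = reachAux T v D n c := by
      intro c hc
      rw [mem_chl] at hc
      refine reachAux_congr hT n c fun y hy => ?_
      have hyd := (inSub_dist hT hy).1
      rw [hD' y, if_neg, if_neg]
      · intro hyb; subst hyb; omega
      · intro hya; subst hya; omega
    rw [Finset.sum_congr rfl fun c hc => by rw [hsum c hc]]
    omega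

lemma step_away (hT : T.IsTree) (hab : T.Adj a b) (h2 : 2 ≤ D a)
    (hD' : ∀ x, D' x = if x = a then D a - 2 else if x = b then D b + 1 else D x)
    (hdir : T.dist b v = T.dist a v + 1) :
    ∀ n x, Fintype.card V ≤ T.dist x v + n → x ≠ b →
      reachAux T v D' n x ≤ reachAux T v D n x := by
  intro n
  induction n with
  | zero =>
    intro x hn _
    have := tree_dist_lt_card hT x v
    omega
  | succ n ih =>
    intro x hn hxb
    by_cases hx : x = a
    · rw [hx] at hn hxb ⊢
      have hb_mem : b ∈ chl T v a := mem_chl.mpr ⟨hab, by omega⟩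
      rw [reachAux_succ, reachAux_succ,
        ← Finset.add_sum_erase _ _ hb_mem, ← Finset.add_sum_erase _ _ hb_mem]
      have herase : ∀ c ∈ (chl T v a).erase b,
          reachAux T v D' n c ≤ reachAux T v D n c := by
        intro c hc
        have hcb : c ≠ b := Finset.ne_of_mem_erase hc
        have hc' := Finset.mem_of_mem_erase hc
        rw [mem_chl] at hc'
        refine le_of_eq (reachAux_congr hT n c fun y hy => ?_)
        obtain ⟨hyd, hye⟩ := inSub_dist hT hy
        rw [hD' y, if_neg, if_neg]
        · intro hyb; subst hyb
          exact hcb (hye (by omega)).symm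
        · intro hya; subst hya; omega
      have hdst := reach_dst hT hab h2 hD' hdir n
      have hx' : D' a = D a - 2 := by rw [hD' a, if_pos rfl]
      rw [hx', hdst]
      have hsum : ∑ c ∈ (chl T v a).erase b, reachAux T v D' n c / 2
          ≤ ∑ c ∈ (chl T v a).erase b, reachAux T v D n c / 2 :=
        Finset.sum_le_sum fun c hc => Nat.div_le_div_right (herase c hc)
      omega
    · rw [reachAux_succ, reachAux_succ]
      have hDx : D' x = D x := by rw [hD' x, if_neg hx, if_neg hxb]
      rw [hDx]
      refine Nat.add_le_add_left (Finset.sum_le_sum fun c hc => ?_) _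
      rw [mem_chl] at hc
      have hcb : c ≠ b := by
        intro hceq; subst hceq
        exact hx (tree_parent_unique (v := v) hT hc.1.symm hab.symm (by omega) (by omega))
      have : reachAux T v D' n c ≤ reachAux T v D n c := ih c (by omega) hcb
      exact Nat.div_le_div_right this

lemma step_reach (hT : T.IsTree) (v : V) (h : PebStep T D D') :
    reachAux T v D' (Fintype.card V) v ≤ reachAux T v D (Fintype.card V) v := by
  obtain ⟨a, b, hab, h2, hDeq⟩ := h
  have hD' : ∀ x, D' x = if x = a then D a - 2 else if x = b then D b + 1 else D x := by
    intro x; rw [hDeq]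
  rcases tree_adj_dist hT v hab with hdir | hdir
  · exact step_toward hT hab h2 hD' (by omega) (Fintype.card V) v (by omega)
  · have hbv : b ≠ v := by
      intro hbv; subst hbv
      rw [SimpleGraph.dist_self] at hdir
      omega
    exact step_away hT hab h2 hD' hdir (Fintype.card V) v (by omega) (Ne.symm hbv)

lemma pebreach_reach (hT : T.IsTree) (v : V) (h : PebReach T D D') :
    reachAux T v D' (Fintype.card V) v ≤ reachAux T v D (Fintype.card V) v := by
  induction h with
  | refl => exact le_refl _
  | tail hrtg hstep ih => exact le_trans (step_reach hT v hstep) ih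

end Steps

section WalkLemmas

variable {T : SimpleGraph V} {v : V}

lemma walk_dist_start {x y : V} (p : T.Walk x y)
    (h : ∀ d ∈ p.darts, T.dist d.snd v + 1 = T.dist d.fst v) :
    T.dist x v = T.dist y v + p.length := by
  induction p with
  | nil => simp
  | @cons x y₀ y hadj q ih =>
    have h0 := h ⟨(x, y₀), hadj⟩ (by simp [SimpleGraph.Walk.darts_cons])
    have h0' : T.dist y₀ v + 1 = T.dist x v := h0
    have h1 := ih fun d hd => h d (by simp [SimpleGraph.Walk.darts_cons, hd])
    simp only [SimpleGraph.Walk.length_cons]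
    omega

lemma walk_dart_fst_le {x y : V} (p : T.Walk x y)
    (h : ∀ d ∈ p.darts, T.dist d.snd v + 1 = T.dist d.fst v) :
    ∀ d ∈ p.darts, T.dist d.fst v ≤ T.dist x v := by
  induction p with
  | nil => simp
  | @cons x y₀ y hadj q ih =>
    intro d hd
    have h0 := h ⟨(x, y₀), hadj⟩ (by simp [SimpleGraph.Walk.darts_cons])
    rw [SimpleGraph.Walk.darts_cons] at hd
    rcases List.mem_cons.mp hd with rfl | hd'
    · exact le_refl _
    · have h1 := ih (fun d hd => h d (by simp [SimpleGraph.Walk.darts_cons, hd])) d hd'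
      have h0' : T.dist y₀ v + 1 = T.dist x v := h0
      have h2 := walk_dist_start (v := v) q (fun d hd => h d (by
        simp [SimpleGraph.Walk.darts_cons, hd]))
      omega

lemma walk_dart_end_le {x y : V} (p : T.Walk x y)
    (h : ∀ d ∈ p.darts, T.dist d.snd v + 1 = T.dist d.fst v) :
    ∀ d ∈ p.darts, T.dist y v ≤ T.dist d.snd v := by
  induction p with
  | nil => simp
  | @cons x y₀ y hadj q ih =>
    intro d hd
    rw [SimpleGraph.Walk.darts_cons] at hd
    rcases List.mem_cons.mp hd with rfl | hd'
    · have h2 := walk_dist_start (v := v) q (fun d hd => h d (by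
        simp [SimpleGraph.Walk.darts_cons, hd]))
      show T.dist y v ≤ T.dist y₀ v
      omega
    · exact ih (fun d hd => h d (by simp [SimpleGraph.Walk.darts_cons, hd])) d hd'

lemma walk_mid_dart {x y : V} (p : T.Walk x y) (d : T.Dart) (hd : d ∈ p.darts)
    (hne : d.snd ≠ y) : ∃ d' ∈ p.darts, d'.fst = d.snd := by
  induction p with
  | nil => simp at hd
  | @cons x y₀ y hadj q ih =>
    rw [SimpleGraph.Walk.darts_cons] at hd
    rcases List.mem_cons.mp hd with rfl | hd'
    · replace hne : y₀ ≠ y := hne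
      cases q with
      | nil => exact absurd rfl hne
      | @cons _ z _ hadj' q' =>
        exact ⟨⟨(y₀, z), hadj'⟩, by simp [SimpleGraph.Walk.darts_cons], rfl⟩
    · obtain ⟨d', hd'', hfst⟩ := ih hd' hne
      exact ⟨d', by simp [SimpleGraph.Walk.darts_cons, hd''], hfst⟩

lemma walk_first_dart {x y : V} (p : T.Walk x y) (hl : 0 < p.length) :
    ∃ d ∈ p.darts, d.fst = x := by
  cases p with
  | nil => simp at hl
  | @cons _ y₀ _ hadj q => exact ⟨⟨(x, y₀), hadj⟩, by simp [SimpleGraph.Walk.darts_cons], rfl⟩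

end WalkLemmas

section SubUnique

variable {T : SimpleGraph V} [Fintype V]

lemma sub_descend (hT : T.IsTree) {v w x : V} (hw : w ≠ x) (hsub : inSub T v x w) :
    ∃ y, T.Adj w y ∧ T.dist y v + 1 = T.dist w v ∧ inSub T v x y := by
  obtain ⟨p0, hp0⟩ := hT.isConnected.exists_walk_length_eq_dist w x
  have hb : p0.bypass.IsPath := SimpleGraph.Walk.bypass_isPath p0
  have hlen : p0.bypass.length = T.dist w x := tree_path_len hT _ hb
  have hpos : 0 < T.dist w x := hT.isConnected.pos_dist_of_ne hw
  cases hq : p0.bypass with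
  | nil => exact absurd rfl hw
  | @cons _ y _ hadj q =>
    rw [hq] at hb hlen
    have hq' : q.length = T.dist y x := tree_path_len hT _ hb.of_cons
    simp only [SimpleGraph.Walk.length_cons] at hlen
    have htri : T.dist y v ≤ T.dist y x + T.dist x v := hT.isConnected.dist_triangle
    unfold inSub at hsub
    have hd2 : T.dist w x = T.dist w v - T.dist x v := by omega
    rcases tree_adj_dist hT v hadj with hdd | hdd
    · refine ⟨y, hadj, by omega, ?_⟩
      unfold inSub
      omega
    · omega

lemma sub_unique (hT : T.IsTree) {v : V} :
    ∀ (k : ℕ) (w x x' : V), T.dist w v = T.dist x v + k → T.dist w v = T.dist x' v + k →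
      inSub T v x w → inSub T v x' w → x = x' := by
  intro k
  induction k with
  | zero =>
    intro w x x' h1 h2 hs1 hs2
    unfold inSub at hs1 hs2
    have e1 : T.dist w x = 0 := by omega
    have e2 : T.dist w x' = 0 := by omega
    rw [← (hT.isConnected.dist_eq_zero_iff).mp e1, ← (hT.isConnected.dist_eq_zero_iff).mp e2]
  | succ k ih =>
    intro w x x' h1 h2 hs1 hs2
    have hwx : w ≠ x := by
      intro he; subst he
      omega
    have hwx' : w ≠ x' := by
      intro he; subst he
      omega
    obtain ⟨y, hy1, hy2, hy3⟩ := sub_descend hT hwx hs1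
    obtain ⟨y', hy1', hy2', hy3'⟩ := sub_descend hT hwx' hs2
    have : y = y' := tree_parent_unique (v := v) hT hy1 hy1' hy2 hy2'
    subst this
    exact ih y x x' (by omega) (by omega) hy3 hy3'

end SubUnique

section SumHelpers

lemma sum_ite_le_list {α : Type*} (l : List α) (f : α → ℕ) (M : ℕ)
    (hpw : l.Pairwise fun x y => f x = 0 ∨ f y = 0) (hf : ∀ x ∈ l, f x ≤ M) :
    (l.map f).sum ≤ M := by
  induction l with
  | nil => simp
  | cons a l ih =>
    rw [List.pairwise_cons] at hpw
    by_cases hfa : f a = 0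
    · simp only [List.map_cons, List.sum_cons, hfa, Nat.zero_add]
      exact ih hpw.2 fun x hx => hf x (List.mem_cons_of_mem a hx)
    · have hzero : (l.map f).sum = 0 := by
        refine List.sum_eq_zero fun x hx => ?_
        obtain ⟨b, hb, rfl⟩ := List.mem_map.mp hx
        rcases hpw.1 b hb with h | h
        · exact absurd h hfa
        · exact h
      simp only [List.map_cons, List.sum_cons, hzero, Nat.add_zero]
      exact hf a List.mem_cons_self

lemma sum_ite_le_fin {α : Type*} [DecidableEq α] (s : Finset α) (p : α → Prop)
    [DecidablePred p] (g : α → ℕ) (M : ℕ)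
    (hg : ∀ c ∈ s, p c → g c ≤ M)
    (hu : ∀ c ∈ s, ∀ c' ∈ s, p c → p c' → c = c') :
    (∑ c ∈ s, if p c then g c else 0) ≤ M := by
  by_cases hex : ∃ c ∈ s, p c
  · obtain ⟨c₀, hc₀, hp₀⟩ := hex
    rw [Finset.sum_eq_single_of_mem c₀ hc₀
      (fun b hb hbne => if_neg (fun hpb => hbne (hu b hb c₀ hc₀ hpb hp₀)))]
    rw [if_pos hp₀]
    exact hg c₀ hc₀ hp₀
  · rw [Finset.sum_eq_zero (fun c hc => if_neg (fun hpc => hex ⟨c, hc, hpc⟩))]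
    exact Nat.zero_le M

end SumHelpers


end AuxLemmas

/-- Given a path partition of the tree rooted at `v` with nonincreasing lengths,
placing `t·2^{a₁} - 1` pebbles on the far endpoint of the longest path and
`2^{aᵢ} - 1` on the far endpoints of the other paths yields a distribution from
which `t` pebbles cannot be moved to `v`. -/
theorem partition_distribution_unsolvable (T : SimpleGraph V) [Fintype V]
    (hT : T.IsTree) (v : V) (t : ℕ) (ht : 1 ≤ t)
    (q₁ : Σ a : V, Σ b : V, T.Walk a b) (rest : PathSys T)
    (hP : IsPartitionTo T (fun u => T.dist u v) (q₁ :: rest))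
    (hsorted : List.Pairwise (· ≥ ·) (sysLengths (q₁ :: rest))) :
    ¬ ∃ D', PebReach T
        (fun x =>
          (if x = q₁.1 then t * 2 ^ q₁.2.2.length - 1 else 0) +
          (rest.map fun q => if x = q.1 then 2 ^ q.2.2.length - 1 else 0).sum) D' ∧
      t ≤ D' v := by
  
  classical
  rintro ⟨D', hreach, htv⟩
  obtain ⟨t', rfl⟩ : ∃ t', t = t' + 1 := ⟨t - 1, by omega⟩
  set t := t' + 1 with hts
  set P : PathSys T := q₁ :: rest with hPdef
  obtain ⟨hPath, hDisj, hCov⟩ := hP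
  set D₀ : V → ℕ := (fun x =>
      (if x = q₁.1 then t * 2 ^ q₁.2.2.length - 1 else 0) +
      (rest.map fun q => if x = q.1 then 2 ^ q.2.2.length - 1 else 0).sum) with hD₀def
  -- each dart of the partition decreases distance by exactly one
  have hstep : ∀ q ∈ P, ∀ d ∈ q.2.2.darts, T.dist d.snd v + 1 = T.dist d.fst v := by
    intro q hq d hd
    have h3 : T.dist d.snd v < T.dist d.fst v := (hPath q hq).2.2 d hd
    rcases tree_adj_dist hT v d.adj with h | h <;> omega
  have hSymm : Symmetric (fun q r : (Σ a : V, Σ b : V, T.Walk a b) =>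
      ∀ e ∈ q.2.2.edges, e ∉ r.2.2.edges) := fun q r h e her heq => h e heq her
  have hmem_edges : ∀ {x y : V} (w : T.Walk x y) (d : T.Dart), d ∈ w.darts → d.edge ∈ w.edges :=
    fun w d hd => List.mem_map_of_mem hd
  -- uniqueness of the covering dart
  have hU : ∀ q ∈ P, ∀ q' ∈ P, ∀ d ∈ q.2.2.darts, ∀ d' ∈ q'.2.2.darts,
      d.fst = d'.fst → q = q' ∧ d = d' := by
    intro q hq q' hq' d hd d' hd' hfst
    have h1 := hstep q hq d hd
    have h2 := hstep q' hq' d' hd'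
    have hsnd : d.snd = d'.snd := by
      refine tree_parent_unique (v := v) (b := d.fst) hT d.adj ?_ h1 ?_
      · rw [hfst]; exact d'.adj
      · rw [hfst]; exact h2
    have hdd : d = d' := SimpleGraph.Dart.ext _ _ (Prod.ext hfst hsnd)
    by_cases hqq : q = q'
    · exact ⟨hqq, hdd⟩
    · exfalso
      have hedge : d.edge ∈ q.2.2.edges := hmem_edges _ _ hd
      have hedge' : d.edge ∈ q'.2.2.edges := by rw [hdd]; exact hmem_edges _ _ hd'
      haveI : Std.Symm (fun q r : (Σ a : V, Σ b : V, T.Walk a b) =>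
          ∀ e ∈ q.2.2.edges, e ∉ r.2.2.edges) := ⟨fun a b h => hSymm h⟩
      exact (hDisj.forall hq hq' hqq) d.edge hedge hedge'
  -- every non-root vertex has a covering dart
  have hCov' : ∀ u, u ≠ v → ∃ q ∈ P, ∃ d ∈ q.2.2.darts, d.fst = u := by
    intro u hu
    obtain ⟨x, hadj, hdx⟩ := tree_exists_parent hT hu
    obtain ⟨q, hq, he⟩ := hCov u x hadj (show T.dist x v < T.dist u v by omega)
    obtain ⟨d, hd, hde⟩ := List.mem_map.mp he
    rcases (SimpleGraph.dart_edge_eq_mk'_iff'.mp hde) with h | h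
    · exact ⟨q, hq, d, hd, h.1⟩
    · exfalso
      have h1 := hstep q hq d hd
      rw [h.1, h.2] at h1
      omega
  have hEndLt : ∀ q ∈ P, ∀ d ∈ q.2.2.darts, T.dist q.2.1 v < T.dist d.fst v := by
    intro q hq d hd
    have h1 := hstep q hq d hd
    have h2 := walk_dart_end_le (v := v) q.2.2 (hstep q hq) d hd
    omega
  have hLen : ∀ q ∈ P, T.dist q.1 v = T.dist q.2.1 v + q.2.2.length :=
    fun q hq => walk_dist_start q.2.2 (hstep q hq)
  have hStartCov : ∀ q ∈ P, ∃ d ∈ q.2.2.darts, d.fst = q.1 :=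
    fun q hq => walk_first_dart q.2.2 (hPath q hq).2.1
  have hStartNe : ∀ q ∈ P, q.1 ≠ v := by
    intro q hq h
    obtain ⟨d, hd, hfst⟩ := hStartCov q hq
    have h1 := hstep q hq d hd
    rw [hfst, h, SimpleGraph.dist_self] at h1
    omega
  have hStartInj : ∀ q ∈ P, ∀ q' ∈ P, q.1 = q'.1 → q = q' := by
    intro q hq q' hq' h
    obtain ⟨d, hd, hfst⟩ := hStartCov q hq
    obtain ⟨d', hd', hfst'⟩ := hStartCov q' hq'
    exact (hU q hq q' hq' d hd d' hd' (by rw [hfst, hfst', h])).1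
  have hq₁P : q₁ ∈ P := List.mem_cons_self
  have hq₁len : 0 < q₁.2.2.length := (hPath q₁ hq₁P).2.1
  have hHead : ∀ r ∈ rest, q₁ ≠ r := by
    intro r hr heq
    have hrel := (List.pairwise_cons.mp hDisj).1 r hr
    obtain ⟨d, hd, -⟩ := hStartCov q₁ hq₁P
    exact hrel d.edge (hmem_edges _ _ hd) (by rw [← heq]; exact hmem_edges _ _ hd)
  -- values of D₀
  have hD0v : D₀ v = 0 := by
    rw [hD₀def]
    simp only
    rw [if_neg (fun h => hStartNe q₁ hq₁P h.symm), Nat.zero_add]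
    refine List.sum_eq_zero fun x hx => ?_
    obtain ⟨r, hr, rfl⟩ := List.mem_map.mp hx
    exact if_neg (fun h => hStartNe r (List.mem_cons_of_mem _ hr) h.symm)
  have hD0b : ∀ u q, q ∈ P → (∃ d ∈ q.2.2.darts, d.fst = u) → u ≠ q.1 → D₀ u = 0 := by
    intro u q hq ⟨d, hd, hdfst⟩ hustart
    rw [hD₀def]
    simp only
    rw [if_neg, Nat.zero_add]
    · refine List.sum_eq_zero fun x hx => ?_
      obtain ⟨r, hr, rfl⟩ := List.mem_map.mp hx
      refine if_neg fun h => ?_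
      obtain ⟨dr, hdr, hdrfst⟩ := hStartCov r (List.mem_cons_of_mem _ hr)
      have := (hU r (List.mem_cons_of_mem _ hr) q hq dr hdr d hd (by rw [hdrfst, hdfst, h])).1
      exact hustart (by rw [← this, ← h])
    · intro h
      obtain ⟨d1, hd1, hd1fst⟩ := hStartCov q₁ hq₁P
      have := (hU q₁ hq₁P q hq d1 hd1 d hd (by rw [hd1fst, hdfst, h])).1
      exact hustart (by rw [← this, ← h])
  have hD0a : ∀ u q, q ∈ P → (∃ d ∈ q.2.2.darts, d.fst = u) → u = q.1 →
      D₀ u ≤ (if u = q₁.1 then t else 1) * 2 ^ q.2.2.length - 1 := by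
    intro u q hq ⟨d, hd, hdfst⟩ hustart
    by_cases hq1 : u = q₁.1
    · have hqeq : q = q₁ := hStartInj q hq q₁ hq₁P (by rw [← hustart, ← hq1])
      have hrest : (rest.map fun r => if u = r.1 then 2 ^ r.2.2.length - 1 else 0).sum = 0 := by
        refine List.sum_eq_zero fun x hx => ?_
        obtain ⟨r, hr, rfl⟩ := List.mem_map.mp hx
        refine if_neg fun h => ?_
        exact hHead r hr (hStartInj q₁ hq₁P r (List.mem_cons_of_mem _ hr) (by rw [← hq1, ← h]))
      rw [hD₀def]
      simp only
      rw [if_pos hq1, hrest, Nat.add_zero, if_pos hq1]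
      have : q.2.2.length = q₁.2.2.length := by rw [hqeq]
      rw [this]
    · rw [hD₀def]
      simp only
      rw [if_neg hq1, Nat.zero_add, if_neg hq1, one_mul]
      refine sum_ite_le_list rest _ (2 ^ q.2.2.length - 1) ?_ ?_
      · refine List.Pairwise.imp_of_mem ?_ (List.pairwise_cons.mp hDisj).2
        intro r r' hr hr' hrel
        by_cases h1 : u = r.1
        · by_cases h2 : u = r'.1
          · exfalso
            have : r = r' := hStartInj r (List.mem_cons_of_mem _ hr) r'
              (List.mem_cons_of_mem _ hr') (by rw [← h1, ← h2])
            subst this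
            obtain ⟨dr, hdr, -⟩ := hStartCov r (List.mem_cons_of_mem _ hr)
            exact hrel dr.edge (hmem_edges _ _ hdr) (hmem_edges _ _ hdr)
          · right; exact if_neg h2
        · left; exact if_neg h1
      · intro r hr
        by_cases h1 : u = r.1
        · rw [if_pos h1]
          have : r = q := hStartInj r (List.mem_cons_of_mem _ hr) q hq (by rw [← h1, ← hustart])
          rw [this]
        · rw [if_neg h1]; exact Nat.zero_le _
  -- uniqueness of the boosted child
  have hBoostU : ∀ u : V, ∀ c ∈ chl T v u, ∀ c' ∈ chl T v u,
      inSub T v c q₁.1 → inSub T v c' q₁.1 → c = c' := by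
    intro u c hc c' hc' hb hb'
    rw [mem_chl] at hc hc'
    have h1 : T.dist c v ≤ T.dist q₁.1 v := by
      have := hb; unfold inSub at this; omega
    refine sub_unique hT (T.dist q₁.1 v - T.dist c v) q₁.1 c c' (by omega) ?_ hb hb'
    have h2 : T.dist c' v ≤ T.dist q₁.1 v := by
      have := hb'; unfold inSub at this; omega
    omega
  -- the key invariant
  have inv : ∀ n u q, q ∈ P → ∀ d ∈ q.2.2.darts, d.fst = u →
      reachAux T v D₀ n u ≤
        (if inSub T v u q₁.1 then t else 1) * 2 ^ (T.dist u v - T.dist q.2.1 v) - 1 := by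
    intro n
    induction n with
    | zero =>
      intro u q hq d hd hdfst
      show D₀ u ≤ _
      by_cases hstart : u = q.1
      · have h1 := hD0a u q hq ⟨d, hd, hdfst⟩ hstart
        have h2 := hLen q hq
        have hexp : T.dist u v - T.dist q.2.1 v = q.2.2.length := by rw [hstart]; omega
        rw [hexp]
        by_cases hq1 : u = q₁.1
        · rw [if_pos hq1] at h1
          rw [if_pos (show inSub T v u q₁.1 by rw [hq1]; exact inSub_self v q₁.1)]
          exact h1
        · rw [if_neg hq1, one_mul] at h1
          refine le_trans h1 (Nat.sub_le_sub_right ?_ 1)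
          have hcoef : (1:ℕ) ≤ ite (inSub T v u q₁.1) t 1 := by split <;> omega
          exact Nat.le_mul_of_pos_left _ (by omega)
      · rw [hD0b u q hq ⟨d, hd, hdfst⟩ hstart]
        exact Nat.zero_le _
    | succ n ih =>
      intro u q hq d hd hdfst
      rw [reachAux_succ]
      have hu_step := hstep q hq d hd
      rw [hdfst] at hu_step
      have hEnd' : T.dist q.2.1 v < T.dist u v := by
        have := hEndLt q hq d hd; rw [hdfst] at this; exact this
      set s₀ := T.dist u v - T.dist q.2.1 v with hs₀
      have hspos : 1 ≤ s₀ := by omega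
      have h2p : 1 ≤ 2 ^ s₀ := Nat.one_le_two_pow
      have he2 : t * 2 ^ s₀ = t' * 2 ^ s₀ + 2 ^ s₀ := by rw [hts]; ring
      -- derive the same-path dart in q from the same-path predicate
      have hSame : ∀ c ∈ chl T v u,
          (∃ q' ∈ P, ∃ d' ∈ q'.2.2.darts, d'.fst = c ∧ q'.2.1 ≠ u) →
          ∃ dc ∈ q.2.2.darts, dc.fst = c ∧ dc.snd = u := by
        rintro c hc ⟨q', hq', d', hd', hfst, hne⟩
        rw [mem_chl] at hc
        have hs' := hstep q' hq' d' hd'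
        have hsnd : d'.snd = u := by
          refine tree_parent_unique (v := v) (b := c) hT ?_ hc.1.symm ?_ (by omega)
          · rw [← hfst]; exact d'.adj
          · rw [hfst] at hs'; omega
        obtain ⟨du, hdu', hdufst⟩ := walk_mid_dart q'.2.2 d' hd'
          (by rw [hsnd]; exact fun h => hne h.symm)
        obtain ⟨hqeq, -⟩ := hU q' hq' q hq du hdu' d hd (by rw [hdufst, hdfst, hsnd])
        rw [hqeq] at hd'
        exact ⟨d', hd', hfst, hsnd⟩
      -- per-child bound
      have hchild : ∀ c ∈ chl T v u, reachAux T v D₀ n c / 2 ≤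
          (if (∃ q' ∈ P, ∃ d' ∈ q'.2.2.darts, d'.fst = c ∧ q'.2.1 ≠ u)
            then 2 ^ s₀ - 1 else 0) +
          (if inSub T v c q₁.1 then t' * 2 ^ s₀ else 0) := by
        intro c hc
        have hcm := hc
        rw [mem_chl] at hcm
        have hcv : c ≠ v := by
          intro h; rw [h, SimpleGraph.dist_self] at hcm; omega
        obtain ⟨qc, hqc, dc, hdc, hdcfst⟩ := hCov' c hcv
        have hIH := ih c qc hqc dc hdc hdcfst
        have hscpos : T.dist qc.2.1 v < T.dist c v := by
          have := hEndLt qc hqc dc hdc; rw [hdcfst] at this; exact this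
        by_cases hend : qc.2.1 = u
        · -- path ends at u
          have hsc1 : T.dist c v - T.dist qc.2.1 v = 1 := by rw [hend]; omega
          rw [hsc1, pow_one] at hIH
          have hno : ¬ ∃ q' ∈ P, ∃ d' ∈ q'.2.2.darts, d'.fst = c ∧ q'.2.1 ≠ u := by
            rintro ⟨q', hq', d', hd', hfst, hne⟩
            obtain ⟨hqeq, -⟩ := hU q' hq' qc hqc d' hd' dc hdc (by rw [hfst, hdcfst])
            rw [hqeq] at hne
            exact hne hend
          rw [if_neg hno, Nat.zero_add]
          by_cases hboost : inSub T v c q₁.1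
          · rw [if_pos hboost] at hIH
            rw [if_pos hboost]
            have h1 : reachAux T v D₀ n c / 2 ≤ t - 1 := by omega
            have h2 : t' ≤ t' * 2 ^ s₀ := Nat.le_mul_of_pos_right _ (by omega)
            omega
          · rw [if_neg hboost, one_mul] at hIH
            rw [if_neg hboost]
            omega
        · -- same path as u
          have hyes : ∃ q' ∈ P, ∃ d' ∈ q'.2.2.darts, d'.fst = c ∧ q'.2.1 ≠ u :=
            ⟨qc, hqc, dc, hdc, hdcfst, hend⟩
          rw [if_pos hyes]
          obtain ⟨dq, hdq, hdqfst, hdqsnd⟩ := hSame c hc hyes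
          -- qc = q
          have hs'' := hstep qc hqc dc hdc
          have hdcsnd : dc.snd = u := by
            refine tree_parent_unique (v := v) (b := c) hT ?_ hcm.1.symm ?_ (by omega)
            · rw [← hdcfst]; exact dc.adj
            · rw [hdcfst] at hs''; omega
          obtain ⟨du, hdu', hdufst⟩ := walk_mid_dart qc.2.2 dc hdc (by
            rw [hdcsnd]; exact fun h => hend h.symm)
          have hfsteq : du.fst = d.fst := by rw [hdufst, hdcsnd, hdfst]
          obtain ⟨hqeq, -⟩ := hU qc hqc q hq du hdu' d hd hfsteq
          have hqc21 : qc.2.1 = q.2.1 := by rw [hqeq]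
          have hsceq : T.dist c v - T.dist qc.2.1 v = s₀ + 1 := by rw [hqc21]; omega
          rw [hsceq, pow_succ] at hIH
          by_cases hboost : inSub T v c q₁.1
          · rw [if_pos hboost] at hIH ⊢
            have e1 : t * (2 ^ s₀ * 2) = 2 * (t * 2 ^ s₀) := by ring
            rw [e1] at hIH
            omega
          · rw [if_neg hboost] at hIH ⊢
            rw [one_mul] at hIH
            omega
      -- sums
      have hsplit : (∑ c ∈ chl T v u, reachAux T v D₀ n c / 2) ≤
          (∑ c ∈ chl T v u, if (∃ q' ∈ P, ∃ d' ∈ q'.2.2.darts, d'.fst = c ∧ q'.2.1 ≠ u)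
            then 2 ^ s₀ - 1 else 0) +
          (∑ c ∈ chl T v u, if inSub T v c q₁.1 then t' * 2 ^ s₀ else 0) := by
        rw [← Finset.sum_add_distrib]
        exact Finset.sum_le_sum hchild
      have hsndinj : ∀ d1 ∈ q.2.2.darts, ∀ d2 ∈ q.2.2.darts, d1.snd = d2.snd → d1 = d2 := by
        have hnd : (q.2.2.darts.map fun d => d.snd).Nodup := by
          rw [SimpleGraph.Walk.map_snd_darts]
          exact (hPath q hq).1.support_nodup.tail
        exact fun d1 h1 d2 h2 h => List.inj_on_of_nodup_map hnd h1 h2 h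
      have hS1 : (∑ c ∈ chl T v u, if (∃ q' ∈ P, ∃ d' ∈ q'.2.2.darts, d'.fst = c ∧ q'.2.1 ≠ u)
          then 2 ^ s₀ - 1 else 0) ≤ 2 ^ s₀ - 1 := by
        refine sum_ite_le_fin _ _ _ _ (fun c hc _ => le_refl _) ?_
        intro c hc c' hc' hp hp'
        obtain ⟨dc, hdc, hf, hs⟩ := hSame c hc hp
        obtain ⟨dc', hdc', hf', hs'⟩ := hSame c' hc' hp'
        have := hsndinj dc hdc dc' hdc' (by rw [hs, hs'])
        rw [← hf, ← hf', this]
      have hS2 : (∑ c ∈ chl T v u, if inSub T v c q₁.1 then t' * 2 ^ s₀ else 0) ≤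
          t' * 2 ^ s₀ := by
        refine sum_ite_le_fin _ _ _ _ (fun c hc _ => le_refl _) (hBoostU u)
      -- assembly
      by_cases hstart : u = q.1
      · have hS1z : (∑ c ∈ chl T v u, if (∃ q' ∈ P, ∃ d' ∈ q'.2.2.darts, d'.fst = c ∧ q'.2.1 ≠ u)
            then 2 ^ s₀ - 1 else 0) = 0 := by
          refine Finset.sum_eq_zero fun c hc => if_neg fun hp => ?_
          obtain ⟨dc, hdc, hf, -⟩ := hSame c hc hp
          have h1 := walk_dart_fst_le (v := v) q.2.2 (hstep q hq) dc hdc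
          rw [hf] at h1
          rw [mem_chl] at hc
          rw [← hstart] at h1
          omega
        have hDu := hD0a u q hq ⟨d, hd, hdfst⟩ hstart
        have hexp : s₀ = q.2.2.length := by
          have := hLen q hq; rw [hs₀, hstart]; omega
        by_cases hq1 : u = q₁.1
        · have hS2z : (∑ c ∈ chl T v u, if inSub T v c q₁.1 then t' * 2 ^ s₀ else 0) = 0 := by
            refine Finset.sum_eq_zero fun c hc => if_neg fun hb => ?_
            have hb' : T.dist u v = T.dist u c + T.dist c v := by
              rw [hq1]; exact hb
            rw [mem_chl] at hc
            omega
          rw [if_pos hq1, ← hexp] at hDu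
          rw [if_pos (show inSub T v u q₁.1 by rw [hq1]; exact inSub_self v q₁.1)]
          omega
        · rw [if_neg hq1, one_mul, ← hexp] at hDu
          by_cases hboost : inSub T v u q₁.1
          · rw [if_pos hboost]
            omega
          · rw [if_neg hboost, one_mul]
            have hS2z : (∑ c ∈ chl T v u, if inSub T v c q₁.1 then t' * 2 ^ s₀ else 0) = 0 :=
              Finset.sum_eq_zero fun c hc => if_neg fun hb => hboost (inSub_child hT hc hb)
            omega
      · have hDu : D₀ u = 0 := hD0b u q hq ⟨d, hd, hdfst⟩ hstart
        by_cases hboost : inSub T v u q₁.1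
        · rw [if_pos hboost]
          omega
        · rw [if_neg hboost, one_mul]
          have hS2z : (∑ c ∈ chl T v u, if inSub T v c q₁.1 then t' * 2 ^ s₀ else 0) = 0 :=
            Finset.sum_eq_zero fun c hc => if_neg fun hb => hboost (inSub_child hT hc hb)
          omega
  -- conclude: at the root
  have hfin : reachAux T v D₀ (Fintype.card V) v ≤ t - 1 := by
    obtain ⟨m, hm⟩ : ∃ m, Fintype.card V = m + 1 :=
      ⟨Fintype.card V - 1, by have : 0 < Fintype.card V := Fintype.card_pos_iff.mpr ⟨v⟩; omega⟩
    rw [hm, reachAux_succ, hD0v, Nat.zero_add]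
    have hch : ∀ c ∈ chl T v v, reachAux T v D₀ m c / 2 ≤
        if inSub T v c q₁.1 then t - 1 else 0 := by
      intro c hc
      rw [mem_chl] at hc
      rw [SimpleGraph.dist_self] at hc
      have hcv : c ≠ v := by
        intro h; rw [h, SimpleGraph.dist_self] at hc; omega
      obtain ⟨qc, hqc, dc, hdc, hdcfst⟩ := hCov' c hcv
      have hs' := hstep qc hqc dc hdc
      have hdcsnd : dc.snd = v := by
        have h1 : T.dist dc.snd v = 0 := by rw [hdcfst] at hs'; omega
        exact (hT.isConnected.dist_eq_zero_iff).mp h1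
      have hend : qc.2.1 = v := by
        by_contra hne
        obtain ⟨d', hd', hfst⟩ := walk_mid_dart qc.2.2 dc hdc
          (by rw [hdcsnd]; exact fun h => hne h.symm)
        have h2 := hstep qc hqc d' hd'
        rw [hfst, hdcsnd, SimpleGraph.dist_self] at h2
        omega
      have hIH := inv m c qc hqc dc hdc hdcfst
      have hse : T.dist c v - T.dist qc.2.1 v = 1 := by
        rw [hend, SimpleGraph.dist_self]; omega
      rw [hse, pow_one] at hIH
      by_cases hb : inSub T v c q₁.1
      · rw [if_pos hb] at hIH ⊢; omega
      · rw [if_neg hb] at hIH ⊢; rw [one_mul] at hIH; omega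
    refine le_trans (Finset.sum_le_sum hch) ?_
    exact sum_ite_le_fin _ _ _ _ (fun c hc _ => le_refl _) (hBoostU v)
  have h1 : t ≤ reachAux T v D' (Fintype.card V) v :=
    le_trans htv (le_reachAux _ v)
  have h2 := pebreach_reach hT v hreach
  omega
end

section
/- Let S be a sequence of pebbling moves on a graph G whose transition digraph T(G,S) is acyclic, transforming distribution D₀ into distribution D*. Then there is a linear ordering v_1, ..., v_n of the vertices of G such that every directed edge v_i → v_j of T(G,S) satisfies i < j, and the moves of S can be rearranged so that all moves out of v_1 are performed first, then all moves out of v_2, etc., and this rearranged sequence is a valid sequence of pebbling moves from D₀ that also reaches D*. -/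
open SimpleGraph Finset

variable {V : Type*} [DecidableEq V]

/-- A valid sequence of pebbling moves: `ValidSeq G D S D'` means executing the
moves of `S` in order (each move `(u,v)` removes two pebbles from `u`, which must
hold at least two, and adds one on the adjacent vertex `v`) transforms `D` into `D'`. -/
inductive ValidSeq (G : SimpleGraph V) : (V → ℕ) → List (V × V) → (V → ℕ) → Prop
  | nil (D : V → ℕ) : ValidSeq G D [] D
  | cons (D : V → ℕ) (u v : V) (huv : G.Adj u v) (h2 : 2 ≤ D u) {S : List (V × V)}
      {D' : V → ℕ}
      (h : ValidSeq G (fun x => if x = u then D u - 2 else if x = v then D v + 1 else D x)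
        S D') :
      ValidSeq G D ((u, v) :: S) D'

/-- A generalized pebbling move among vertices of `A`, on integer-valued distributions. -/
def ZStepOn (G : SimpleGraph V) (A : Set V) (C C' : V → ℤ) : Prop :=
  ∃ u v, u ∈ A ∧ v ∈ A ∧ G.Adj u v ∧ 2 ≤ C u ∧
    C' = fun x => if x = u then C u - 2 else if x = v then C v + 1 else C x

/-- A generalized distribution is `0`-solvable within `A` if pebbling moves inside `A`
reach a distribution nonnegative on `A`. -/
def ZSolvableOn (G : SimpleGraph V) (A : Set V) (C : V → ℤ) : Prop :=
  ∃ C', Relation.ReflTransGen (ZStepOn G A) C C' ∧ ∀ x ∈ A, 0 ≤ C' x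

/-- Iterated leaf contraction: `Contract G s C s' C'` means the generalized
distribution `C` on the vertex set `s` can be contracted to `C'` on `s'` by repeatedly
deleting a leaf `x` (a vertex with a unique neighbor `y` in the current set), replacing
`C y` by `C y + ⌊C x / 2⌋` if `C x ≥ 0` and by `C y + 2 C x` if `C x < 0`. -/
inductive Contract (G : SimpleGraph V) : Finset V → (V → ℤ) → Finset V → (V → ℤ) → Prop
  | refl (s : Finset V) (C : V → ℤ) : Contract G s C s C
  | step {s : Finset V} {C : V → ℤ} (x y : V) (hx : x ∈ s) (hy : y ∈ s)
      (hadj : G.Adj x y) (hleaf : ∀ z ∈ s, G.Adj x z → z = y)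
      {s' : Finset V} {C' : V → ℤ}
      (h : Contract G (s.erase x)
        (fun w => if w = y then C y + (if 0 ≤ C x then C x / 2 else 2 * C x) else C w)
        s' C') :
      Contract G s C s' C'

/-- Exchange: a move out of `u` can be pulled in front of moves not touching `u`. -/
lemma ValidSeq.exchange (G : SimpleGraph V) {u v : V} {D' : V → ℕ} :
    ∀ (A : List (V × V)) (B : List (V × V)) (D : V → ℕ),
      ValidSeq G D (A ++ (u, v) :: B) D' → (∀ m ∈ A, m.1 ≠ u ∧ m.2 ≠ u) →
      ValidSeq G D ((u, v) :: (A ++ B)) D' := by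
  intro A
  induction A with
  | nil => intro B D h _; exact h
  | cons m A' ih =>
    intro B D h hA
    obtain ⟨hau, hbu⟩ := hA m List.mem_cons_self
    cases h with
    | cons _ a b hab ha2 h' =>
      have h2 := ih B _ h' (fun m hm => hA m (List.mem_cons_of_mem _ hm))
      cases h2 with
      | cons _ _ _ huv hu2 h'' =>
        have hu2' : 2 ≤ D u := by simpa [Ne.symm hau, Ne.symm hbu] using hu2
        refine ValidSeq.cons D u v huv hu2' ?_
        refine ValidSeq.cons _ a b hab ?_ ?_
        · by_cases hav : a = v
          · subst hav; simp [hau]; omega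
          · simpa [hau, hav] using ha2
        · have heq :
            (fun x => if x = a then (fun y => if y = u then D u - 2 else if y = v then D v + 1 else D y) a - 2
              else if x = b then (fun y => if y = u then D u - 2 else if y = v then D v + 1 else D y) b + 1
              else (fun y => if y = u then D u - 2 else if y = v then D v + 1 else D y) x)
            = (fun x => if x = u then (fun y => if y = a then D a - 2 else if y = b then D b + 1 else D y) u - 2
              else if x = v then (fun y => if y = a then D a - 2 else if y = b then D b + 1 else D y) v + 1
              else (fun y => if y = a then D a - 2 else if y = b then D b + 1 else D y) x) := by
            funext x
            by_cases hxa : x = a <;> by_cases hxb : x = b <;> by_cases hxu : x = u <;>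
              by_cases hxv : x = v <;> simp_all
          rw [heq]
          exact h''

/-- Split the first element satisfying `p`. -/
lemma split_first {α : Type*} (p : α → Prop) [DecidablePred p] :
    ∀ (S : List α), (∃ m ∈ S, p m) → ∃ A m B, S = A ++ m :: B ∧ p m ∧ ∀ m' ∈ A, ¬ p m' := by
  intro S
  induction S with
  | nil => simp
  | cons a S ih =>
    intro h
    by_cases hpa : p a
    · exact ⟨[], a, S, rfl, hpa, by simp⟩
    · obtain ⟨m, hm, hpm⟩ := h
      rcases List.mem_cons.1 hm with rfl | hm
      · exact absurd hpm hpa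
      · obtain ⟨A, m', B, hEq, hpm', hA⟩ := ih ⟨m, hm, hpm⟩
        refine ⟨a :: A, m', B, by rw [hEq]; rfl, hpm', ?_⟩
        intro x hx
        rcases List.mem_cons.1 hx with rfl | hx
        · exact hpa
        · exact hA x hx

lemma rearrange_aux {n : ℕ} (G : SimpleGraph V) (e : V → Fin n) :
    ∀ (k : ℕ) (S : List (V × V)) (D₀ D : V → ℕ), S.length ≤ k →
      ValidSeq G D₀ S D → (∀ m ∈ S, e m.1 < e m.2) →
      ∃ S' : List (V × V), S.Perm S' ∧
        S'.Pairwise (fun m m' => e m.1 ≤ e m'.1) ∧ ValidSeq G D₀ S' D := by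
  intro k
  induction k with
  | zero =>
    intro S D₀ D hlen hS _
    have : S = [] := List.length_eq_zero_iff.1 (Nat.le_zero.1 hlen)
    subst this
    exact ⟨[], List.Perm.refl _, List.Pairwise.nil, hS⟩
  | succ k ih =>
    intro S D₀ D hlen hS hmono
    rcases S.eq_nil_or_concat with rfl | hne
    · exact ⟨[], List.Perm.refl _, List.Pairwise.nil, hS⟩
    have hSne : S ≠ [] := by rcases hne with ⟨L, b, rfl⟩; simp
    -- pick a move whose source has minimal e-value
    obtain ⟨m₀, hm₀⟩ : ∃ m₀, m₀ ∈ S.argmin (fun m => e m.1) := by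
      rcases Option.eq_none_or_eq_some (S.argmin (fun m => e m.1)) with h | ⟨a, h⟩
      · exact absurd (List.argmin_eq_none.1 h) hSne
      · exact ⟨a, h⟩
    set u := m₀.1 with hu
    have humem : m₀ ∈ S := List.argmin_mem hm₀
    have hmin : ∀ m ∈ S, e u ≤ e m.1 := fun m hm =>
      List.le_of_mem_argmin (f := fun m => e m.1) hm hm₀
    -- split at the first move with source u
    obtain ⟨A, m, B, hEq, hpm, hA⟩ :=
      split_first (fun m : V × V => m.1 = u) S ⟨m₀, humem, rfl⟩
    obtain ⟨mu, mv⟩ := m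
    simp only at hpm
    subst hpm
    -- no move in S targets u
    have hnotarget : ∀ m' ∈ S, m'.2 ≠ u := by
      intro m' hm' hcon
      have h1 := hmono m' hm'
      have h2 := hmin m' hm'
      rw [hcon] at h1
      exact absurd (lt_of_le_of_lt h2 h1) (lt_irrefl _)
    have hAu : ∀ m' ∈ A, m'.1 ≠ u ∧ m'.2 ≠ u := by
      intro m' hm'
      refine ⟨hA m' hm', hnotarget m' ?_⟩
      rw [hEq]; exact List.mem_append_left _ hm'
    rw [hEq] at hS
    have hex := ValidSeq.exchange G A B D₀ hS hAu
    cases hex with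
    | cons _ _ _ huv h2 h' =>
      have hlen' : (A ++ B).length ≤ k := by
        have := hlen
        rw [hEq] at this
        simp only [List.length_append, List.length_cons] at this ⊢
        omega
      have hsub : ∀ m' ∈ A ++ B, m' ∈ S := by
        intro m' hm'
        rw [hEq]
        rcases List.mem_append.1 hm' with h | h
        · exact List.mem_append_left _ h
        · exact List.mem_append_right _ (List.mem_cons_of_mem _ h)
      obtain ⟨S'', hperm, hpair, hvalid⟩ :=
        ih (A ++ B) _ D hlen' h' (fun m' hm' => hmono m' (hsub m' hm'))
      refine ⟨(u, mv) :: S'', ?_, ?_, ?_⟩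
      · rw [hEq]
        exact List.perm_middle.trans (hperm.cons _)
      · refine List.Pairwise.cons ?_ hpair
        intro m' hm'
        exact hmin m' (hsub m' (hperm.symm.subset hm'))
      · exact ValidSeq.cons _ _ _ huv h2 hvalid

/-- An acyclic sequence of pebbling moves can be rearranged along a topological
ordering of the vertices: there is a linear ordering of `V` respected by all moves,
and a permutation of `S` sorted by the order of the source vertices which is still a
valid move sequence from `D₀` reaching `D`. -/
theorem rearrange_acyclic_sequence (G : SimpleGraph V) [Fintype V] (D₀ D : V → ℕ)
    (S : List (V × V)) (hS : ValidSeq G D₀ S D)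
    (hacyc : ∀ u, ¬ Relation.TransGen (fun a b => (a, b) ∈ S) u u) :
    ∃ e : V ≃ Fin (Fintype.card V),
      (∀ m ∈ S, e m.1 < e m.2) ∧
      ∃ S' : List (V × V), S.Perm S' ∧
        S'.Pairwise (fun m m' => e m.1 ≤ e m'.1) ∧
        ValidSeq G D₀ S' D := by
  classical
  set r : V → V → Prop :=
    fun a b => a = b ∨ Relation.TransGen (fun a b => (a, b) ∈ S) a b with hr
  haveI : IsPartialOrder V r :=
    { refl := fun a => Or.inl rfl
      trans := by
        rintro a b c (rfl | hab) (rfl | hbc)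
        · exact Or.inl rfl
        · exact Or.inr hbc
        · exact Or.inr hab
        · exact Or.inr (hab.trans hbc)
      antisymm := by
        rintro a b (rfl | hab) hba
        · rfl
        · rcases hba with rfl | hba
          · rfl
          · exact absurd (hab.trans hba) (hacyc a) }
  obtain ⟨s, hslin, hsub⟩ := extend_partialOrder r
  haveI := hslin
  letI : LinearOrder V :=
    { le := s
      le_refl := refl_of s
      le_trans := fun a b c => trans_of s
      le_antisymm := fun a b => antisymm_of s
      le_total := total_of s
      toDecidableLE := Classical.decRel s }
  have hcard : (Finset.univ : Finset V).card = Fintype.card V := Finset.card_univ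
  let iso := Finset.orderIsoOfFin (Finset.univ : Finset V) hcard
  let e : V ≃ Fin (Fintype.card V) :=
    (Equiv.subtypeUnivEquiv (fun x => Finset.mem_univ x)).symm.trans iso.toEquiv.symm
  have hmono : ∀ m ∈ S, e m.1 < e m.2 := by
    intro m hm
    have hne : m.1 ≠ m.2 := by
      intro hcon
      have hm' : (m.1, m.2) ∈ S := by simpa using hm
      rw [← hcon] at hm'
      exact hacyc m.1 (Relation.TransGen.single hm')
    have hle : s m.1 m.2 := hsub _ _ (Or.inr (Relation.TransGen.single hm))
    have hlt : m.1 < m.2 := lt_of_le_of_ne hle hne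
    exact iso.symm.strictMono (Subtype.mk_lt_mk.2 hlt)
  obtain ⟨S', hperm, hpair, hvalid⟩ :=
    rearrange_aux G (fun x => e x) S.length S D₀ D le_rfl hS hmono
  exact ⟨e, hmono, S', hperm, hpair, hvalid⟩
end
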